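/- Fix reals α, β with α > −1, β > −1 and α − β > −1, and integers n, k, m, j with 0 ≤ k, k + 1 ≤ n, and 0 ≤ j ≤ m. Let Q_{n,k}(x,y) denote the derivative at α of the map a ↦ P^{(a,β)}_{n,k}(x,y), where P denotes the Laguerre–Laguerre Koornwinder polynomials. If j ≠ k, or if j = k and m ≥ n, then ∫_0^∞∫_0^∞ P^{(α,β)}_{m,j}(x,y) · Q_{n,k}(x,y) · x^{α−β} y^{β} e^{−(x+y/x)} dy dx = 0; and if j = k and n > m ≥ k, then this integral equals (1/(n−m)) · t_{m,k}^{(α,β)}. -/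

import Mathlib

open Finset MeasureTheory Real

/-- Pochhammer symbol `(a)_m = a (a+1) ⋯ (a+m-1)`. -/
noncomputable def poch (a : ℝ) (m : ℕ) : ℝ := ∏ i ∈ Finset.range m, (a + i)

/-- Jacobi polynomial `P_n^{(α,β)}(x)`. -/
noncomputable def jacobiP (α β : ℝ) (n : ℕ) (x : ℝ) : ℝ :=
  ∑ i ∈ Finset.range (n + 1),
    poch (α + i + 1) (n - i) * poch (n + α + β + 1) i /
      ((Nat.factorial (n - i) : ℝ) * (Nat.factorial i : ℝ)) * ((x - 1) / 2) ^ i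

/-- Generalized Laguerre polynomial `L_n^{(α)}(x)`. -/
noncomputable def laguerreL (α : ℝ) (n : ℕ) (x : ℝ) : ℝ :=
  ∑ i ∈ Finset.range (n + 1),
    poch (α + i + 1) (n - i) / ((Nat.factorial (n - i) : ℝ) * (Nat.factorial i : ℝ)) * (-x) ^ i

/-- Laguerre–Laguerre Koornwinder polynomial
`P^{(α,β)}_{n,k}(x,y) = L^{(α+2k+1)}_{n-k}(x) · x^k · L^{(β)}_k(y/x)`. -/
noncomputable def llP (α β : ℝ) (n k : ℕ) (x y : ℝ) : ℝ :=
  laguerreL (α + 2 * k + 1) (n - k) x * x ^ k * laguerreL β k (y / x)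

/-- Squared norm constant `t_{n,k}^{(α,β)}` of the Laguerre–Laguerre Koornwinder polynomials. -/
noncomputable def tconst (α β : ℝ) (n k : ℕ) : ℝ :=
  Real.Gamma (β + k + 1) * Real.Gamma (α + n + k + 2) /
    ((Nat.factorial k : ℝ) * (Nat.factorial (n - k) : ℝ))

noncomputable def dpoch (z : ℝ) : ℕ → ℝ
  | 0 => 0
  | (r+1) => dpoch z r * (z + r) + poch z r

lemma poch_zero (z : ℝ) : poch z 0 = 1 := by simp [poch]

lemma poch_succ (z : ℝ) (r : ℕ) : poch z (r+1) = poch z r * (z + r) := by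
  simp [poch, Finset.prod_range_succ]

lemma poch_succ' (z : ℝ) (r : ℕ) : poch z (r+1) = z * poch (z+1) r := by
  rw [poch, poch, Finset.prod_range_succ']
  have h : ∀ x ∈ Finset.range r, z + ((x:ℕ):ℝ) + 1 = (z+1) + x := fun x _ => by ring
  have h2 : (∏ x ∈ Finset.range r, (z + ↑(x+1))) = ∏ x ∈ Finset.range r, ((z+1) + x) := by
    apply Finset.prod_congr rfl; intro x _; push_cast; ring
  rw [h2]; push_cast; ring

lemma poch_pos {z : ℝ} (hz : 0 < z) (r : ℕ) : 0 < poch z r := by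
  apply Finset.prod_pos; intro i _; positivity

lemma hasDerivAt_poch (z : ℝ) (r : ℕ) : HasDerivAt (fun t => poch t r) (dpoch z r) z := by
  induction r with
  | zero => simpa [poch, dpoch] using hasDerivAt_const z (1:ℝ)
  | succ r ih =>
      have : HasDerivAt (fun t => poch t r * (t + r))
          (dpoch z r * (z + r) + poch z r * 1) z := ih.mul ((hasDerivAt_id z).add_const _)
      simp only [mul_one] at this
      simpa only [poch_succ, dpoch] using this

lemma dpoch_eq {z : ℝ} (hz : 0 < z) (r : ℕ) :
    dpoch z r = poch z r * ∑ s ∈ Finset.range r, 1 / (z + s) := by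
  induction r with
  | zero => simp [dpoch]
  | succ r ih =>
      have hzr : (0:ℝ) < z + r := by positivity
      rw [dpoch, ih, Finset.sum_range_succ, poch_succ]
      field_simp

lemma pochDiff (z : ℝ) (r : ℕ) :
    poch z r - poch (z+1) r = -(r:ℝ) * poch (z+1) (r-1) := by
  cases r with
  | zero => simp [poch]
  | succ r =>
      rw [poch_succ' z r, poch_succ (z+1) r]
      push_cast
      ring_nf

/-- key reshuffle: alternating binomial sums -/
lemma altsum_succ (N : ℕ) (q : ℕ → ℝ) :
    ∑ i ∈ Finset.range (N+2), (-1:ℝ)^i * (N+1).choose i * q i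
      = ∑ i ∈ Finset.range (N+1), (-1:ℝ)^i * N.choose i * (q i - q (i+1)) := by
  have L : ∑ i ∈ Finset.range (N+2), (-1:ℝ)^i * (N+1).choose i * q i
      = q 0 + ∑ i ∈ Finset.range (N+1), (-1:ℝ)^(i+1) * ((N.choose i : ℝ) + N.choose (i+1)) * q (i+1) := by
    rw [Finset.sum_range_succ' (fun i => (-1:ℝ)^i * (N+1).choose i * q i) (N+1)]
    simp only [Nat.choose_succ_succ, Nat.choose_zero_right]
    push_cast
    ring
  have R : ∑ i ∈ Finset.range (N+1), (-1:ℝ)^i * N.choose i * (q i - q (i+1))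
      = (∑ i ∈ Finset.range (N+1), (-1:ℝ)^i * N.choose i * q i)
        - ∑ i ∈ Finset.range (N+1), (-1:ℝ)^i * N.choose i * q (i+1) := by
    rw [← Finset.sum_sub_distrib]; apply Finset.sum_congr rfl; intros; ring
  have R1 : ∑ i ∈ Finset.range (N+1), (-1:ℝ)^i * N.choose i * q i
      = q 0 + ∑ i ∈ Finset.range N, (-1:ℝ)^(i+1) * N.choose (i+1) * q (i+1) := by
    rw [Finset.sum_range_succ' (fun i => (-1:ℝ)^i * N.choose i * q i) N]
    simp; ring
  have R1' : ∑ i ∈ Finset.range N, (-1:ℝ)^(i+1) * N.choose (i+1) * q (i+1)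
      = ∑ i ∈ Finset.range (N+1), (-1:ℝ)^(i+1) * N.choose (i+1) * q (i+1) := by
    rw [Finset.sum_range_succ]
    simp [Nat.choose_succ_self]
  rw [L, R, R1, R1']
  rw [add_sub_assoc]
  congr 1
  rw [← Finset.sum_sub_distrib]
  apply Finset.sum_congr rfl; intros; push_cast; ring

lemma SL (N : ℕ) : ∀ (z : ℝ) (r : ℕ),
    ∑ i ∈ Finset.range (N+1), (-1:ℝ)^i * N.choose i * poch (z+i) r
      = (-1:ℝ)^N * (r.descFactorial N) * poch (z+N) (r-N) := by
  induction N with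
  | zero => intro z r; simp
  | succ N ih =>
      intro z r
      have key : ∑ i ∈ Finset.range (N+2), (-1:ℝ)^i * (N+1).choose i * poch (z+i) r
          = ∑ i ∈ Finset.range (N+1), (-1:ℝ)^i * N.choose i
              * (poch (z+i) r - poch (z+((i+1:ℕ):ℕ)) r) :=
        altsum_succ N (fun i => poch (z+i) r)
      rw [key]
      have step : ∀ i ∈ Finset.range (N+1),
          (-1:ℝ)^i * N.choose i * (poch (z+((i:ℕ):ℕ)) r - poch (z+((i+1:ℕ):ℕ)) r)
            = -(r:ℝ) * ((-1:ℝ)^i * N.choose i * poch ((z+1)+i) (r-1)) := by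
        intro i _
        have h1 : z+(((i+1:ℕ):ℕ):ℝ) = (z+i)+1 := by push_cast; ring
        have h2 : (z+i)+1 = (z+1)+i := by ring
        rw [h1, pochDiff (z+i) r, h2]
        ring
      rw [Finset.sum_congr rfl step, ← Finset.mul_sum, ih (z+1) (r-1)]
      cases r with
      | zero => simp
      | succ r =>
          rw [Nat.succ_descFactorial_succ]
          have h3 : (z+1)+(N:ℝ) = z + ((N:ℕ)+1 : ℕ) := by push_cast; ring
          have h4 : r + 1 - (N+1) = r - N := by omega
          rw [h3, h4]
          push_cast
          ring

lemma altpartial (p : ℕ) (j : ℕ) :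
    ∑ v ∈ Finset.range (j+1), (-1:ℝ)^v * ((p+1).choose v) = (-1:ℝ)^j * (p.choose j) := by
  induction j with
  | zero => simp
  | succ j ih =>
      rw [Finset.sum_range_succ, ih, Nat.choose_succ_succ]
      push_cast
      ring

lemma invsum (p : ℕ) : ∀ (z : ℝ), 0 < z →
    ∑ w ∈ Finset.range (p+1), (-1:ℝ)^w * (p.choose w) * (1/(z+w))
      = (p.factorial : ℝ) / poch z (p+1) := by
  induction p with
  | zero => intro z hz; simp [poch]
  | succ p ih =>
      intro z hz
      have hz1 : (0:ℝ) < z + 1 := by linarith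
      have key := altsum_succ p (fun w => 1/(z+(w:ℕ)))
      rw [key]
      have split : ∑ i ∈ Finset.range (p+1), (-1:ℝ)^i * p.choose i
            * (1/(z+(i:ℕ)) - 1/(z+((i+1:ℕ):ℕ)))
          = (∑ i ∈ Finset.range (p+1), (-1:ℝ)^i * p.choose i * (1/(z+(i:ℕ))))
            - ∑ i ∈ Finset.range (p+1), (-1:ℝ)^i * p.choose i * (1/((z+1)+(i:ℕ))) := by
        rw [← Finset.sum_sub_distrib]
        apply Finset.sum_congr rfl
        intro i _
        have : z+((i+1:ℕ):ℕ) = (z+1)+(i:ℕ) := by push_cast; ring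
        rw [this]; ring
      rw [split, ih z hz, ih (z+1) hz1]
      have P1 := (poch_pos hz (p+1)).ne'
      have P2 := (poch_pos hz1 (p+1)).ne'
      have P3 := (poch_pos hz (p+2)).ne'
      have e1 : poch z (p+2) = z * poch (z+1) (p+1) := poch_succ' z (p+1)
      have e2 : poch z (p+2) = poch z (p+1) * (z + (p+1)) := by
        have := poch_succ z (p+1); push_cast at this ⊢; linarith [this]
      rw [div_sub_div _ _ P1 P2, div_eq_div_iff (mul_ne_zero P1 P2) P3]
      push_cast [Nat.factorial_succ]
      push_cast at e1 e2
      linear_combination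
        ((p.factorial:ℝ) * poch (z+1) (p+1)) * e2 - ((p.factorial:ℝ) * poch z (p+1)) * e1

lemma poch_Gamma {z : ℝ} (hz : 0 < z) (r : ℕ) :
    poch z r * Real.Gamma z = Real.Gamma (z + r) := by
  induction r with
  | zero => simp [poch]
  | succ r ih =>
      have hzr : (0:ℝ) < z + r := by positivity
      have h1 : z + ((r:ℕ)+1:ℕ) = (z + r) + 1 := by push_cast; ring
      rw [h1, Real.Gamma_add_one hzr.ne', poch_succ, mul_comm (poch z r) (z + r),
        mul_assoc, ih]

noncomputable def lcoef (γ : ℝ) (N i : ℕ) : ℝ :=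
  (-1:ℝ)^i * poch (γ+i+1) (N-i) / ((N-i).factorial * i.factorial)

noncomputable def dlcoef (γ : ℝ) (N i : ℕ) : ℝ :=
  (-1:ℝ)^i * dpoch (γ+i+1) (N-i) / ((N-i).factorial * i.factorial)

lemma ML (γ : ℝ) (hγ : -1 < γ) (M r : ℕ) :
    ∑ i ∈ Finset.range (M+1), lcoef γ M i * Real.Gamma (γ + r + i + 1)
      = (-1:ℝ)^M * (r.choose M) * Real.Gamma (γ + r + 1) := by
  have hstep : ∀ i ∈ Finset.range (M+1),
      lcoef γ M i * Real.Gamma (γ + r + i + 1)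
        = ((-1:ℝ)^i * (M.choose i) * poch ((γ+1)+i) r) * (Real.Gamma (γ+M+1) / M.factorial) := by
    intro i hi
    have hi' : i ≤ M := by simpa [Nat.lt_succ_iff] using hi
    have hz : (0:ℝ) < γ + i + 1 := by
      have : (0:ℝ) ≤ i := Nat.cast_nonneg i
      linarith
    have h1 : poch (γ+i+1) (M-i) * Real.Gamma (γ+i+1) = Real.Gamma (γ+M+1) := by
      rw [poch_Gamma hz (M-i)]
      congr 1
      push_cast [Nat.cast_sub hi']
      ring
    have h2 : Real.Gamma (γ + r + i + 1) = poch (γ+i+1) r * Real.Gamma (γ+i+1) := by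
      rw [poch_Gamma hz r]
      congr 1
      ring
    have hC : ((M.choose i : ℝ)) * (i.factorial:ℝ) * ((M-i).factorial:ℝ) = M.factorial := by
      exact_mod_cast congrArg (Nat.cast : ℕ → ℝ) (Nat.choose_mul_factorial_mul_factorial hi')
    have h3 : (γ+1)+(i:ℝ) = γ+i+1 := by ring
    rw [lcoef, h2, h3]
    have f1 : ((M-i).factorial : ℝ) ≠ 0 := Nat.cast_ne_zero.mpr (Nat.factorial_ne_zero _)
    have f2 : ((i).factorial : ℝ) ≠ 0 := Nat.cast_ne_zero.mpr (Nat.factorial_ne_zero _)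
    have f3 : ((M).factorial : ℝ) ≠ 0 := Nat.cast_ne_zero.mpr (Nat.factorial_ne_zero _)
    have fC : (M.choose i : ℝ) ≠ 0 := Nat.cast_ne_zero.mpr (Nat.choose_pos hi').ne'
    rw [← h1, ← hC]
    field_simp
  rw [Finset.sum_congr rfl hstep, ← Finset.sum_mul, SL M (γ+1) r]
  by_cases hrM : M ≤ r
  · have hz2 : (0:ℝ) < γ + M + 1 := by
      have : (0:ℝ) ≤ M := Nat.cast_nonneg M
      linarith
    have h4 : (γ+1)+(M:ℝ) = γ+M+1 := by ring
    have h5 : poch (γ+M+1) (r-M) * Real.Gamma (γ+M+1) = Real.Gamma (γ+r+1) := by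
      rw [poch_Gamma hz2 (r-M)]
      congr 1
      push_cast [Nat.cast_sub hrM]
      ring
    have h6 : (r.descFactorial M : ℝ) = (r.choose M : ℝ) * M.factorial := by
      have := Nat.descFactorial_eq_factorial_mul_choose r M
      push_cast [this]
      ring
    have f3 : ((M).factorial : ℝ) ≠ 0 := Nat.cast_ne_zero.mpr (Nat.factorial_ne_zero _)
    rw [h4, h6]
    field_simp
    linear_combination (r.choose M : ℝ) * h5
  · have h7 : r.descFactorial M = 0 := Nat.descFactorial_eq_zero_iff_lt.mpr (by omega)
    have h8 : r.choose M = 0 := Nat.choose_eq_zero_of_lt (by omega)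
    rw [h7, h8]
    simp

lemma fact_ne0 (n : ℕ) : ((n.factorial : ℝ)) ≠ 0 := Nat.cast_ne_zero.mpr (Nat.factorial_ne_zero _)

lemma gamma_shift (γ : ℝ) (hγ : -1 < γ) {p N : ℕ} (hp : p ≤ N) :
    poch (γ+p+1) (N-p) * Real.Gamma (γ+p+1) = Real.Gamma (γ+N+1) := by
  have hz : (0:ℝ) < γ + p + 1 := by
    have : (0:ℝ) ≤ p := Nat.cast_nonneg p
    linarith
  rw [poch_Gamma hz (N-p)]
  congr 1
  push_cast [Nat.cast_sub hp]
  ring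

lemma Bval (γ : ℝ) (hγ : -1 < γ) (M N : ℕ) :
    ∑ p ∈ Finset.range (M+1), ∑ p' ∈ Finset.range (N+1),
        lcoef γ M p * lcoef γ N p' * Real.Gamma (γ + p + p' + 1)
      = if M = N then Real.Gamma (γ+M+1) / M.factorial else 0 := by
  rw [Finset.sum_comm]
  have hinner : ∀ p' ∈ Finset.range (N+1),
      ∑ p ∈ Finset.range (M+1), lcoef γ M p * lcoef γ N p' * Real.Gamma (γ + p + p' + 1)
        = lcoef γ N p' * ((-1:ℝ)^M * (p'.choose M : ℝ) * Real.Gamma (γ + p' + 1)) := by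
    intro p' _
    have : ∀ p ∈ Finset.range (M+1),
        lcoef γ M p * lcoef γ N p' * Real.Gamma (γ + p + p' + 1)
          = lcoef γ N p' * (lcoef γ M p * Real.Gamma (γ + p' + p + 1)) := by
      intro p _
      have harg : γ + (p:ℝ) + p' + 1 = γ + p' + p + 1 := by ring
      rw [harg]; ring
    rw [Finset.sum_congr rfl this, ← Finset.mul_sum, ML γ hγ M p']
  rw [Finset.sum_congr rfl hinner]
  by_cases hMN : M ≤ N
  · -- convert terms
    have hterm : ∀ p' ∈ Finset.range (N+1),
        lcoef γ N p' * ((-1:ℝ)^M * (p'.choose M : ℝ) * Real.Gamma (γ + p' + 1))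
          = (-1:ℝ)^(p'+M) * (p'.choose M : ℝ)
              / (((N-p').factorial : ℝ) * (p'.factorial : ℝ)) * Real.Gamma (γ+N+1) := by
      intro p' hp'
      have hp'' : p' ≤ N := by simpa [Nat.lt_succ_iff] using hp'
      have h1 := gamma_shift γ hγ hp''
      rw [lcoef, ← h1]
      have := fact_ne0 (N-p'); have := fact_ne0 p'
      field_simp
      ring
    rw [Finset.sum_congr rfl hterm]
    have hsub : Finset.Ico M (N+1) ⊆ Finset.range (N+1) := by
      intro x hx; simp only [Finset.mem_Ico] at hx; simp [hx.2]
    have hzero : ∀ x ∈ Finset.range (N+1), x ∉ Finset.Ico M (N+1) →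
        (-1:ℝ)^(x+M) * (x.choose M : ℝ)
          / (((N-x).factorial : ℝ) * (x.factorial : ℝ)) * Real.Gamma (γ+N+1) = 0 := by
      intro x hx hnx
      have : x < M := by
        simp only [Finset.mem_range] at hx
        simp only [Finset.mem_Ico, not_and, not_lt] at hnx
        omega
      rw [Nat.choose_eq_zero_of_lt this]
      simp
    rw [← Finset.sum_subset hsub hzero, Finset.sum_Ico_eq_sum_range]
    have hNM : N + 1 - M = (N - M) + 1 := by omega
    rw [hNM]
    have hterm2 : ∀ v ∈ Finset.range ((N-M)+1),
        (-1:ℝ)^((M+v)+M) * ((M+v).choose M : ℝ)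
            / (((N-(M+v)).factorial : ℝ) * ((M+v).factorial : ℝ)) * Real.Gamma (γ+N+1)
          = (Real.Gamma (γ+N+1) / ((M.factorial : ℝ) * ((N-M).factorial : ℝ)))
              * ((-1:ℝ)^v * ((N-M).choose v : ℝ)) := by
      intro v hv
      have hv' : v ≤ N - M := by simpa [Nat.lt_succ_iff] using hv
      have hsign : (-1:ℝ)^((M+v)+M) = (-1:ℝ)^v := by
        rw [show (M+v)+M = 2*M+v by omega, pow_add, pow_mul]
        norm_num
      have hNMv : N - (M+v) = N - M - v := by omega
      have hc1 : ((M+v).choose M : ℝ) * (M.factorial : ℝ) * (v.factorial : ℝ)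
          = ((M+v).factorial : ℝ) := by
        have := Nat.choose_mul_factorial_mul_factorial (Nat.le_add_right M v)
        rw [Nat.add_sub_cancel_left] at this
        exact_mod_cast congrArg (Nat.cast : ℕ → ℝ) this
      have hc2 : ((N-M).choose v : ℝ) * (v.factorial : ℝ) * ((N-M-v).factorial : ℝ)
          = ((N-M).factorial : ℝ) := by
        have := Nat.choose_mul_factorial_mul_factorial hv'
        exact_mod_cast congrArg (Nat.cast : ℕ → ℝ) this
      rw [hsign, hNMv, ← hc1, ← hc2]
      have f1 := fact_ne0 (N-M-v); have f3 := fact_ne0 M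
      have f5 := fact_ne0 v
      have g1 : (((M+v).choose M : ℕ) : ℝ) ≠ 0 :=
        Nat.cast_ne_zero.mpr (Nat.choose_pos (Nat.le_add_right M v)).ne'
      have g2 : ((((N-M)).choose v : ℕ) : ℝ) ≠ 0 :=
        Nat.cast_ne_zero.mpr (Nat.choose_pos hv').ne'
      field_simp
    rw [Finset.sum_congr rfl hterm2, ← Finset.mul_sum]
    rcases eq_or_lt_of_le hMN with heq | hlt
    · subst heq
      simp [Finset.sum_range_one]
    · have hz := Int.alternating_sum_range_choose (n := N-M)
      rw [if_neg (by omega)] at hz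
      have hz' : ∑ v ∈ Finset.range ((N-M)+1), (-1:ℝ)^v * ((N-M).choose v : ℝ) = 0 := by
        exact_mod_cast congrArg (Int.cast : ℤ → ℝ) hz
      rw [hz', if_neg (by omega)]
      ring
  · -- N < M : all terms vanish
    rw [Finset.sum_eq_zero, if_neg (by omega)]
    intro p' hp'
    have hp'' : p' ≤ N := by simpa [Nat.lt_succ_iff] using hp'
    rw [Nat.choose_eq_zero_of_lt (by omega : p' < M)]
    simp

lemma swapIco (N : ℕ) (A g : ℕ → ℝ) :
    ∑ i ∈ Finset.range (N+1), A i * ∑ t ∈ Finset.Ico i N, g t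
      = ∑ t ∈ Finset.range N, (∑ i ∈ Finset.range (t+1), A i) * g t := by
  have h1 : ∀ i ∈ Finset.range (N+1),
      A i * ∑ t ∈ Finset.Ico i N, g t
        = ∑ t ∈ Finset.range N, (if i ≤ t then A i * g t else 0) := by
    intro i _
    have hIco : Finset.Ico i N = Finset.filter (fun t => i ≤ t) (Finset.range N) := by
      ext a; simp [Finset.mem_Ico, Finset.mem_range]; omega
    rw [hIco, Finset.mul_sum, Finset.sum_filter]
  rw [Finset.sum_congr rfl h1, Finset.sum_comm]
  apply Finset.sum_congr rfl
  intro t ht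
  have ht' : t < N := Finset.mem_range.mp ht
  have hfil : Finset.filter (fun i => i ≤ t) (Finset.range (N+1)) = Finset.range (t+1) := by
    ext a; simp [Finset.mem_range]; omega
  rw [← Finset.sum_filter, hfil, Finset.sum_mul]

lemma Aval (γ : ℝ) (hγ : -1 < γ) (M N : ℕ) :
    ∑ i ∈ Finset.range (M+1), ∑ i' ∈ Finset.range (N+1),
        lcoef γ M i * dlcoef γ N i' * Real.Gamma (γ + i + i' + 1)
      = if N ≤ M then 0
        else Real.Gamma (γ+M+1) / (((N:ℝ) - (M:ℝ)) * (M.factorial : ℝ)) := by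
  rw [Finset.sum_comm]
  have hinner : ∀ i' ∈ Finset.range (N+1),
      ∑ i ∈ Finset.range (M+1), lcoef γ M i * dlcoef γ N i' * Real.Gamma (γ + i + i' + 1)
        = dlcoef γ N i' * ((-1:ℝ)^M * (i'.choose M : ℝ) * Real.Gamma (γ + i' + 1)) := by
    intro i' _
    have : ∀ i ∈ Finset.range (M+1),
        lcoef γ M i * dlcoef γ N i' * Real.Gamma (γ + i + i' + 1)
          = dlcoef γ N i' * (lcoef γ M i * Real.Gamma (γ + i' + i + 1)) := by
      intro i _
      have harg : γ + (i:ℝ) + i' + 1 = γ + i' + i + 1 := by ring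
      rw [harg]; ring
    rw [Finset.sum_congr rfl this, ← Finset.mul_sum, ML γ hγ M i']
  rw [Finset.sum_congr rfl hinner]
  by_cases hNM : N ≤ M
  · rw [Finset.sum_eq_zero, if_pos hNM]
    intro i' hi'
    have hi'' : i' ≤ N := by simpa [Nat.lt_succ_iff] using hi'
    by_cases hiN : i' = N
    · subst hiN
      simp [dlcoef, dpoch]
    · rw [Nat.choose_eq_zero_of_lt (by omega : i' < M)]
      simp
  · -- M < N
    push_neg at hNM
    have hMN : M ≤ N := hNM.le
    have hterm : ∀ i' ∈ Finset.range (N+1),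
        dlcoef γ N i' * ((-1:ℝ)^M * (i'.choose M : ℝ) * Real.Gamma (γ + i' + 1))
          = (Real.Gamma (γ+N+1) * ((-1:ℝ)^(i'+M) * (i'.choose M : ℝ)
              / (((N-i').factorial : ℝ) * (i'.factorial : ℝ))))
            * ∑ t ∈ Finset.Ico i' N, 1/(γ+(t:ℝ)+1) := by
      intro i' hi'
      have hi'' : i' ≤ N := by simpa [Nat.lt_succ_iff] using hi'
      have hz : (0:ℝ) < γ + i' + 1 := by
        have : (0:ℝ) ≤ i' := Nat.cast_nonneg i'
        linarith
      have hH : ∑ t ∈ Finset.Ico i' N, 1/(γ+(t:ℝ)+1)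
          = ∑ s ∈ Finset.range (N-i'), 1/(γ+(i':ℝ)+1+(s:ℝ)) := by
        rw [Finset.sum_Ico_eq_sum_range]
        apply Finset.sum_congr rfl
        intro s _
        push_cast
        try ring_nf
      have h1 := gamma_shift γ hγ hi''
      rw [dlcoef, dpoch_eq hz (N-i'), hH, ← h1]
      have := fact_ne0 (N-i'); have := fact_ne0 i'
      field_simp
      ring
    rw [Finset.sum_congr rfl hterm, swapIco]
    -- now handle partial sums
    set A : ℕ → ℝ := fun i' => Real.Gamma (γ+N+1) * ((-1:ℝ)^(i'+M) * (i'.choose M : ℝ)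
        / (((N-i').factorial : ℝ) * (i'.factorial : ℝ))) with hA
    have hzero : ∀ x ∈ Finset.range N, x ∉ Finset.Ico M N →
        (∑ i ∈ Finset.range (x+1), A i) * (1/(γ+(x:ℝ)+1)) = 0 := by
      intro x hx hnx
      have hxM : x < M := by
        simp only [Finset.mem_range] at hx
        simp only [Finset.mem_Ico, not_and, not_lt] at hnx
        omega
      rw [Finset.sum_eq_zero, zero_mul]
      intro i hi
      have : i < M := by
        have := Finset.mem_range.mp hi; omega
      rw [hA]
      simp only []
      rw [Nat.choose_eq_zero_of_lt this]
      simp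
    have hsub : Finset.Ico M N ⊆ Finset.range N := by
      intro x hx; simp only [Finset.mem_Ico] at hx; simp [hx.2]
    rw [← Finset.sum_subset hsub hzero, Finset.sum_Ico_eq_sum_range]
    -- partial sums values
    have hpart : ∀ w ∈ Finset.range (N-M),
        (∑ i ∈ Finset.range ((M+w)+1), A i) * (1/(γ+((M+w:ℕ):ℝ)+1))
          = (Real.Gamma (γ+N+1) / ((M.factorial:ℝ) * ((N-M).factorial:ℝ)))
              * ((-1:ℝ)^w * (((N-M-1).choose w : ℕ):ℝ))
              * (1/((γ+(M:ℝ)+1)+(w:ℝ))) := by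
      intro w hw
      have hw' : w < N - M := Finset.mem_range.mp hw
      have hAsum : (∑ i ∈ Finset.range ((M+w)+1), A i)
          = (Real.Gamma (γ+N+1) / ((M.factorial:ℝ) * ((N-M).factorial:ℝ)))
              * ((-1:ℝ)^w * (((N-M-1).choose w : ℕ):ℝ)) := by
        -- drop terms below M and reindex
        have hsub2 : Finset.Ico M (M+w+1) ⊆ Finset.range (M+w+1) := by
          intro x hx; simp only [Finset.mem_Ico] at hx; simp [hx.2]
        have hzero2 : ∀ x ∈ Finset.range (M+w+1), x ∉ Finset.Ico M (M+w+1) → A x = 0 := by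
          intro x hx hnx
          have : x < M := by
            simp only [Finset.mem_range] at hx
            simp only [Finset.mem_Ico, not_and, not_lt] at hnx
            omega
          rw [hA]
          simp only []
          rw [Nat.choose_eq_zero_of_lt this]
          simp
        rw [← Finset.sum_subset hsub2 hzero2, Finset.sum_Ico_eq_sum_range]
        have h9 : M + w + 1 - M = w + 1 := by omega
        rw [h9]
        have hterm3 : ∀ v ∈ Finset.range (w+1),
            A (M+v) = (Real.Gamma (γ+N+1) / ((M.factorial:ℝ) * ((N-M).factorial:ℝ)))
                * ((-1:ℝ)^v * (((N-M-1)+1).choose v : ℕ)) := by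
          intro v hv
          have hv' : v ≤ w := by simpa [Nat.lt_succ_iff] using hv
          have hvNM : v ≤ N - M := by omega
          have hsign : (-1:ℝ)^((M+v)+M) = (-1:ℝ)^v := by
            rw [show (M+v)+M = 2*M+v by omega, pow_add, pow_mul]
            norm_num
          have hNMv : N - (M+v) = N - M - v := by omega
          have hc1 : ((M+v).choose M : ℝ) * (M.factorial : ℝ) * (v.factorial : ℝ)
              = ((M+v).factorial : ℝ) := by
            have := Nat.choose_mul_factorial_mul_factorial (Nat.le_add_right M v)
            rw [Nat.add_sub_cancel_left] at this
            exact_mod_cast congrArg (Nat.cast : ℕ → ℝ) this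
          have hc2 : ((N-M).choose v : ℝ) * (v.factorial : ℝ) * ((N-M-v).factorial : ℝ)
              = ((N-M).factorial : ℝ) := by
            have := Nat.choose_mul_factorial_mul_factorial hvNM
            exact_mod_cast congrArg (Nat.cast : ℕ → ℝ) this
          have h10 : (N-M-1)+1 = N-M := by omega
          rw [hA]
          simp only []
          rw [hsign, hNMv, h10, ← hc1, ← hc2]
          have f1 := fact_ne0 (N-M-v); have f3 := fact_ne0 M
          have f5 := fact_ne0 v
          have g1 : (((M+v).choose M : ℕ) : ℝ) ≠ 0 :=
            Nat.cast_ne_zero.mpr (Nat.choose_pos (Nat.le_add_right M v)).ne'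
          have g2 : ((((N-M)).choose v : ℕ) : ℝ) ≠ 0 :=
            Nat.cast_ne_zero.mpr (Nat.choose_pos hvNM).ne'
          field_simp
        rw [Finset.sum_congr rfl hterm3, ← Finset.mul_sum, altpartial (N-M-1) w]
      rw [hAsum]
      have h11 : γ+((M+w:ℕ):ℝ)+1 = (γ+(M:ℝ)+1)+(w:ℝ) := by push_cast; ring
      rw [h11]
    rw [Finset.sum_congr rfl hpart]
    have hzpos : (0:ℝ) < γ + M + 1 := by
      have : (0:ℝ) ≤ M := Nat.cast_nonneg M
      linarith
    have hNM1 : (N-M-1)+1 = N-M := by omega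
    have hinv : ∑ w ∈ Finset.range (N-M), (-1:ℝ)^w * (((N-M-1).choose w : ℕ):ℝ)
          * (1/((γ+(M:ℝ)+1)+(w:ℝ)))
        = ((N-M-1).factorial : ℝ) / poch (γ+(M:ℝ)+1) (N-M) := by
      have := invsum (N-M-1) (γ+(M:ℝ)+1) hzpos
      rw [hNM1] at this
      exact this
    have hfin : ∑ w ∈ Finset.range (N-M),
        (Real.Gamma (γ+N+1) / ((M.factorial:ℝ) * ((N-M).factorial:ℝ)))
          * ((-1:ℝ)^w * (((N-M-1).choose w : ℕ):ℝ)) * (1/((γ+(M:ℝ)+1)+(w:ℝ)))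
        = (Real.Gamma (γ+N+1) / ((M.factorial:ℝ) * ((N-M).factorial:ℝ)))
          * (((N-M-1).factorial : ℝ) / poch (γ+(M:ℝ)+1) (N-M)) := by
      rw [← hinv, Finset.mul_sum]
      apply Finset.sum_congr rfl
      intro w _
      ring
    rw [hfin]
    -- final algebra
    have hGpos : (0:ℝ) < Real.Gamma (γ+N+1) := Real.Gamma_pos_of_pos (by
      have : (0:ℝ) ≤ N := Nat.cast_nonneg N
      linarith)
    have hpoch := gamma_shift γ hγ hMN
    have hpochpos := poch_pos hzpos (N-M)
    have hfacNM : ((N-M).factorial : ℝ) = ((N:ℝ)-(M:ℝ)) * ((N-M-1).factorial : ℝ) := by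
      have h12 : N-M = (N-M-1)+1 := by omega
      rw [h12, Nat.factorial_succ]
      push_cast [Nat.cast_sub hMN]
      have : ((N-M-1:ℕ):ℝ) = (N:ℝ)-(M:ℝ)-1 := by
        push_cast [Nat.cast_sub hMN, Nat.cast_sub (by omega : 1 ≤ N-M)]
        ring
      rw [this]
      ring
    rw [if_neg (by omega)]
    have hNMr : (0:ℝ) < (N:ℝ)-(M:ℝ) := by
      have : (M:ℝ) < (N:ℝ) := by exact_mod_cast hNM
      linarith
    have f3 := fact_ne0 M
    have f6 := fact_ne0 (N-M-1)
    rw [hfacNM]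
    field_simp
    linear_combination (-1:ℝ) * hpoch

open Set in
lemma integrableOn_pow_rpow_exp (q : ℕ) (s : ℝ) (hs : -1 < s) (b : ℝ) (hb : 0 < b) :
    MeasureTheory.IntegrableOn (fun t : ℝ => t^q * t^s * Real.exp (-(b*t))) (Set.Ioi 0) := by
  have hs' : -1 < s + q := by
    have : (0:ℝ) ≤ q := Nat.cast_nonneg q
    linarith
  have h := integrableOn_rpow_mul_exp_neg_mul_rpow hs' one_pos hb
  apply h.congr_fun ?_ measurableSet_Ioi
  intro t ht
  have ht' : (0:ℝ) < t := ht
  dsimp only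
  rw [Real.rpow_one, Real.rpow_add ht', Real.rpow_natCast]
  ring

open Set in
lemma integral_pow_rpow_exp (q : ℕ) (s : ℝ) (hs : -1 < s) (b : ℝ) (hb : 0 < b) :
    ∫ t in Set.Ioi (0:ℝ), t^q * t^s * Real.exp (-(b*t))
      = (1/b) ^ (s+q+1) * Real.Gamma (s+q+1) := by
  have ha : (0:ℝ) < s + q + 1 := by
    have : (0:ℝ) ≤ q := Nat.cast_nonneg q
    linarith
  rw [← Real.integral_rpow_mul_exp_neg_mul_Ioi ha hb]
  apply MeasureTheory.setIntegral_congr_fun measurableSet_Ioi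
  intro t ht
  have ht' : (0:ℝ) < t := ht
  have h2 : s + (q:ℝ) + 1 - 1 = s + q := by ring
  dsimp only
  rw [h2, Real.rpow_add ht', Real.rpow_natCast]
  ring

open Set MeasureTheory in
lemma inner_int (β : ℝ) (hβ : -1 < β) (d3 d4 : ℕ) (e f : ℕ → ℝ) (x : ℝ) (hx : 0 < x) :
    ∫ y in Set.Ioi (0:ℝ),
        (∑ p ∈ Finset.range d3, e p * (y/x)^p) * (∑ p' ∈ Finset.range d4, f p' * (y/x)^p')
          * (y ^ β * Real.exp (-(y/x)))
      = (∑ p ∈ Finset.range d3, ∑ p' ∈ Finset.range d4, e p * f p' * Real.Gamma (β+p+p'+1))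
          * x ^ (β+1) := by
  have hxne : x ≠ 0 := hx.ne'
  have hbx : (0:ℝ) < x⁻¹ := inv_pos.mpr hx
  -- rewrite integrand as a sum over the product finset
  have hpt : ∀ y : ℝ,
      (∑ p ∈ Finset.range d3, e p * (y/x)^p) * (∑ p' ∈ Finset.range d4, f p' * (y/x)^p')
          * (y ^ β * Real.exp (-(y/x)))
        = ∑ pq ∈ Finset.range d3 ×ˢ Finset.range d4,
            (e pq.1 * f pq.2 * (x⁻¹)^(pq.1+pq.2)) * (y^(pq.1+pq.2) * y^β * Real.exp (-(x⁻¹*y))) := by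
    intro y
    rw [Finset.sum_mul_sum, Finset.sum_product, Finset.sum_mul]
    apply Finset.sum_congr rfl
    intro p _
    rw [Finset.sum_mul]
    apply Finset.sum_congr rfl
    intro p' _
    have h1 : y / x = x⁻¹ * y := by field_simp
    rw [h1, mul_pow, mul_pow, pow_add, pow_add]
    ring
  rw [MeasureTheory.setIntegral_congr_fun measurableSet_Ioi (fun y _ => hpt y)]
  rw [MeasureTheory.integral_finset_sum]
  · have hterm : ∀ pq ∈ Finset.range d3 ×ˢ Finset.range d4,
        ∫ y in Set.Ioi (0:ℝ),
            (e pq.1 * f pq.2 * (x⁻¹)^(pq.1+pq.2)) * (y^(pq.1+pq.2) * y^β * Real.exp (-(x⁻¹*y)))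
          = e pq.1 * f pq.2 * Real.Gamma (β+pq.1+pq.2+1) * x ^ (β+1) := by
      intro pq _
      rw [MeasureTheory.integral_const_mul, integral_pow_rpow_exp _ _ hβ _ hbx]
      rw [one_div, inv_inv]
      have hsplit : x ^ (β + ((pq.1+pq.2:ℕ):ℝ) + 1) = x ^ ((pq.1+pq.2:ℕ):ℝ) * x ^ (β+1) := by
        rw [← Real.rpow_add hx]
        congr 1
        ring
      rw [hsplit, Real.rpow_natCast]
      have hinvpow : (x⁻¹)^(pq.1+pq.2) * x^(pq.1+pq.2) = 1 := by
        rw [← mul_pow, inv_mul_cancel₀ hxne, one_pow]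
      have hG : Real.Gamma (β + ((pq.1+pq.2:ℕ):ℝ) + 1) = Real.Gamma (β+pq.1+pq.2+1) := by
        congr 1
        push_cast
        ring
      rw [hG]
      calc e pq.1 * f pq.2 * (x⁻¹)^(pq.1+pq.2) * (x^(pq.1+pq.2) * x^(β+1)
              * Real.Gamma (β+pq.1+pq.2+1))
          = ((x⁻¹)^(pq.1+pq.2) * x^(pq.1+pq.2)) * (e pq.1 * f pq.2
              * Real.Gamma (β+pq.1+pq.2+1) * x^(β+1)) := by ring
        _ = e pq.1 * f pq.2 * Real.Gamma (β+pq.1+pq.2+1) * x ^ (β+1) := by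
            rw [hinvpow, one_mul]
    rw [Finset.sum_congr rfl hterm]
    rw [← Finset.sum_product']
    rw [← Finset.sum_mul]
  · intro pq _
    exact (integrableOn_pow_rpow_exp (pq.1+pq.2) β hβ x⁻¹ hbx).const_mul _

open Set MeasureTheory in
lemma eng (α β : ℝ) (hα : -1 < α) (hβ : -1 < β) (j k d1 d2 d3 d4 : ℕ)
    (b c e f : ℕ → ℝ) :
    ∫ x in Set.Ioi (0:ℝ), ∫ y in Set.Ioi (0:ℝ),
        ((∑ i ∈ Finset.range d1, b i * x^i) * x^j * (∑ p ∈ Finset.range d3, e p * (y/x)^p)) *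
        ((∑ i' ∈ Finset.range d2, c i' * x^i') * x^k
          * (∑ p' ∈ Finset.range d4, f p' * (y/x)^p')) *
        (x ^ (α-β) * y ^ β * Real.exp (-(x + y/x)))
      = (∑ i ∈ Finset.range d1, ∑ i' ∈ Finset.range d2,
            b i * c i' * Real.Gamma (α+j+k+i+i'+2))
        * (∑ p ∈ Finset.range d3, ∑ p' ∈ Finset.range d4,
            e p * f p' * Real.Gamma (β+p+p'+1)) := by
  set BSUM := ∑ p ∈ Finset.range d3, ∑ p' ∈ Finset.range d4,
      e p * f p' * Real.Gamma (β+p+p'+1) with hBSUM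
  have hout : ∀ x ∈ Set.Ioi (0:ℝ),
      (∫ y in Set.Ioi (0:ℝ),
        ((∑ i ∈ Finset.range d1, b i * x^i) * x^j * (∑ p ∈ Finset.range d3, e p * (y/x)^p)) *
        ((∑ i' ∈ Finset.range d2, c i' * x^i') * x^k
          * (∑ p' ∈ Finset.range d4, f p' * (y/x)^p')) *
        (x ^ (α-β) * y ^ β * Real.exp (-(x + y/x))))
      = ∑ pq ∈ Finset.range d1 ×ˢ Finset.range d2,
          (BSUM * b pq.1 * c pq.2)
            * (x^(pq.1+pq.2+j+k) * x^(α+1) * Real.exp (-(1*x))) := by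
    intro x hx
    have hx' : (0:ℝ) < x := hx
    have hpt : ∀ y : ℝ,
        ((∑ i ∈ Finset.range d1, b i * x^i) * x^j * (∑ p ∈ Finset.range d3, e p * (y/x)^p)) *
        ((∑ i' ∈ Finset.range d2, c i' * x^i') * x^k
          * (∑ p' ∈ Finset.range d4, f p' * (y/x)^p')) *
        (x ^ (α-β) * y ^ β * Real.exp (-(x + y/x)))
          = ((∑ i ∈ Finset.range d1, b i * x^i) * (∑ i' ∈ Finset.range d2, c i' * x^i')
              * x^j * x^k * x ^ (α-β) * Real.exp (-x))
            * ((∑ p ∈ Finset.range d3, e p * (y/x)^p)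
                * (∑ p' ∈ Finset.range d4, f p' * (y/x)^p') * (y ^ β * Real.exp (-(y/x)))) := by
      intro y
      have hexp : Real.exp (-(x + y/x)) = Real.exp (-x) * Real.exp (-(y/x)) := by
        rw [← Real.exp_add]
        congr 1
        ring
      rw [hexp]
      ring
    rw [MeasureTheory.setIntegral_congr_fun measurableSet_Ioi (fun y _ => hpt y),
      MeasureTheory.integral_const_mul, inner_int β hβ d3 d4 e f x hx']
    -- now a pure pointwise identity in x
    rw [← hBSUM, Finset.sum_product, Finset.sum_mul_sum]
    simp only [Finset.sum_mul]
    apply Finset.sum_congr rfl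
    intro i _
    apply Finset.sum_congr rfl
    intro i' _
    have hxsplit : x ^ (α-β) * x ^ (β+1) = x ^ (α+1) := by
      rw [← Real.rpow_add hx']
      congr 1
      ring
    have h1m : -((1:ℝ)*x) = -x := by ring
    rw [h1m, pow_add, pow_add, pow_add, ← hxsplit]
    ring
  rw [MeasureTheory.setIntegral_congr_fun measurableSet_Ioi hout]
  rw [MeasureTheory.integral_finset_sum]
  · have hA1 : (-1:ℝ) < α + 1 := by linarith
    have hterm : ∀ pq ∈ Finset.range d1 ×ˢ Finset.range d2,
        ∫ x in Set.Ioi (0:ℝ), (BSUM * b pq.1 * c pq.2)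
            * (x^(pq.1+pq.2+j+k) * x^(α+1) * Real.exp (-(1*x)))
          = (b pq.1 * c pq.2 * Real.Gamma (α+j+k+pq.1+pq.2+2)) * BSUM := by
      intro pq _
      rw [MeasureTheory.integral_const_mul,
        integral_pow_rpow_exp (pq.1+pq.2+j+k) (α+1) hA1 1 one_pos]
      rw [one_div_one, Real.one_rpow]
      have hG : Real.Gamma (α+1+((pq.1+pq.2+j+k:ℕ):ℝ)+1)
          = Real.Gamma (α+j+k+pq.1+pq.2+2) := by
        congr 1
        push_cast
        ring
      rw [hG]
      ring
    rw [Finset.sum_congr rfl hterm, ← Finset.sum_mul]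
    congr 1
    rw [Finset.sum_product]
  · intro pq _
    have hA1 : (-1:ℝ) < α + 1 := by linarith
    exact (integrableOn_pow_rpow_exp (pq.1+pq.2+j+k) (α+1) hA1 1 one_pos).const_mul _

lemma laguerre_eq (A : ℝ) (N : ℕ) (z : ℝ) :
    laguerreL A N z = ∑ i ∈ Finset.range (N+1), lcoef A N i * z^i := by
  apply Finset.sum_congr rfl
  intro i _
  rw [lcoef, neg_pow]
  ring

lemma hasDerivAt_laguerre_param (c x a : ℝ) (N : ℕ) :
    HasDerivAt (fun t : ℝ => laguerreL (t + c) N x)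
      (∑ i ∈ Finset.range (N+1), dlcoef (a + c) N i * x^i) a := by
  unfold laguerreL
  apply HasDerivAt.fun_sum
  intro i _
  have h0 : HasDerivAt (fun t : ℝ => t + (c + (i:ℝ) + 1)) 1 a := (hasDerivAt_id a).add_const _
  have h2 := (hasDerivAt_poch (a + (c + (i:ℝ) + 1)) (N-i)).comp a h0
  rw [mul_one] at h2
  have hfun : ((fun z => poch z (N-i)) ∘ (fun t : ℝ => t + (c + (i:ℝ) + 1)))
      = fun t : ℝ => poch (t + c + i + 1) (N-i) := by
    funext t
    simp only [Function.comp]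
    congr 1
    ring
  rw [hfun] at h2
  have harg : a + (c + (i:ℝ) + 1) = a + c + i + 1 := by ring
  rw [harg] at h2
  have h3 := (h2.div_const (((N-i).factorial : ℝ) * (i.factorial : ℝ))).mul_const ((-x)^i)
  have hval : dpoch (a + c + i + 1) (N-i) / (((N-i).factorial : ℝ) * (i.factorial : ℝ))
        * (-x)^i = dlcoef (a + c) N i * x^i := by
    rw [dlcoef, neg_pow]
    ring
  rw [hval] at h3
  exact h3

lemma llP_eq (α β : ℝ) (n k : ℕ) (x y : ℝ) :
    llP α β n k x y
      = (∑ i ∈ Finset.range ((n-k)+1), lcoef (α + 2*(k:ℝ) + 1) (n-k) i * x^i) * x^k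
        * (∑ p ∈ Finset.range (k+1), lcoef β k p * (y/x)^p) := by
  rw [llP, laguerre_eq, laguerre_eq]

lemma deriv_llP (α β : ℝ) (n k : ℕ) (x y : ℝ) :
    deriv (fun a : ℝ => llP a β n k x y) α
      = (∑ i ∈ Finset.range ((n-k)+1), dlcoef (α + 2*(k:ℝ) + 1) (n-k) i * x^i) * x^k
        * (∑ p ∈ Finset.range (k+1), lcoef β k p * (y/x)^p) := by
  have hfun : (fun a : ℝ => llP a β n k x y)
      = fun a : ℝ => laguerreL (a + (2*(k:ℝ) + 1)) (n-k) x * (x^k * laguerreL β k (y/x)) := by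
    funext a
    rw [llP]
    have : a + 2*(k:ℝ) + 1 = a + (2*(k:ℝ)+1) := by ring
    rw [this]
    ring
  rw [hfun]
  rw [((hasDerivAt_laguerre_param (2*(k:ℝ)+1) x α (n-k)).mul_const
    (x^k * laguerreL β k (y/x))).deriv]
  have harg : α + (2*(k:ℝ)+1) = α + 2*(k:ℝ) + 1 := by ring
  rw [harg, laguerre_eq]
  ring


/-- Inner products of Laguerre–Laguerre Koornwinder polynomials with the parameter derivative
(in `α`) of another one. -/
theorem ll_inner_paramDerivAlpha
    (α β : ℝ) (hα : α > -1) (hβ : β > -1) (hαβ : α - β > -1) (n k m j : ℕ)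
    (hk : 0 ≤ k) (hkn : k + 1 ≤ n) (hj : 0 ≤ j) (hjm : j ≤ m) :
    ((j ≠ k ∨ (j = k ∧ m ≥ n)) →
      ∫ x in Set.Ioi (0 : ℝ), ∫ y in Set.Ioi (0 : ℝ),
          llP α β m j x y * deriv (fun a : ℝ => llP a β n k x y) α *
            (x ^ (α - β) * y ^ β * Real.exp (-(x + y / x))) = 0) ∧
    ((j = k ∧ n > m ∧ m ≥ k) →
      ∫ x in Set.Ioi (0 : ℝ), ∫ y in Set.Ioi (0 : ℝ),
          llP α β m j x y * deriv (fun a : ℝ => llP a β n k x y) α *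
            (x ^ (α - β) * y ^ β * Real.exp (-(x + y / x)))
        = (1 / ((n : ℝ) - m)) * tconst α β m k) := by
  have hrw : ∀ x y : ℝ,
      llP α β m j x y * deriv (fun a : ℝ => llP a β n k x y) α *
        (x ^ (α - β) * y ^ β * Real.exp (-(x + y / x)))
      = ((∑ i ∈ Finset.range ((m-j)+1), lcoef (α+2*(j:ℝ)+1) (m-j) i * x^i) * x^j *
          (∑ p ∈ Finset.range (j+1), lcoef β j p * (y/x)^p)) *
        ((∑ i' ∈ Finset.range ((n-k)+1), dlcoef (α+2*(k:ℝ)+1) (n-k) i' * x^i') * x^k *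
          (∑ p' ∈ Finset.range (k+1), lcoef β k p' * (y/x)^p')) *
        (x ^ (α-β) * y ^ β * Real.exp (-(x+y/x))) := by
    intro x y
    rw [llP_eq, deriv_llP]
  have hI : (∫ x in Set.Ioi (0:ℝ), ∫ y in Set.Ioi (0:ℝ),
        llP α β m j x y * deriv (fun a : ℝ => llP a β n k x y) α *
          (x ^ (α - β) * y ^ β * Real.exp (-(x + y / x))))
      = (∑ i ∈ Finset.range ((m-j)+1), ∑ i' ∈ Finset.range ((n-k)+1),
            lcoef (α+2*(j:ℝ)+1) (m-j) i * dlcoef (α+2*(k:ℝ)+1) (n-k) i'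
              * Real.Gamma (α+j+k+i+i'+2))
        * (∑ p ∈ Finset.range (j+1), ∑ p' ∈ Finset.range (k+1),
            lcoef β j p * lcoef β k p' * Real.Gamma (β+p+p'+1)) := by
    simp only [hrw]
    exact eng α β hα hβ j k ((m-j)+1) ((n-k)+1) (j+1) (k+1) _ _ _ _
  have hBv := Bval β hβ j k
  constructor
  · rintro (hne | ⟨rfl, hmn⟩)
    · rw [hI, hBv, if_neg hne, mul_zero]
    · -- j = k (substituted), m ≥ n
      rw [hI]
      have hγ : (-1:ℝ) < α + 2*(j:ℝ) + 1 := by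
        have : (0:ℝ) ≤ j := Nat.cast_nonneg j
        linarith
      have hAeq : (∑ i ∈ Finset.range ((m-j)+1), ∑ i' ∈ Finset.range ((n-j)+1),
            lcoef (α+2*(j:ℝ)+1) (m-j) i * dlcoef (α+2*(j:ℝ)+1) (n-j) i'
              * Real.Gamma (α+j+j+i+i'+2))
          = ∑ i ∈ Finset.range ((m-j)+1), ∑ i' ∈ Finset.range ((n-j)+1),
            lcoef (α+2*(j:ℝ)+1) (m-j) i * dlcoef (α+2*(j:ℝ)+1) (n-j) i'
              * Real.Gamma ((α+2*(j:ℝ)+1)+i+i'+1) := by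
        apply Finset.sum_congr rfl; intro i _
        apply Finset.sum_congr rfl; intro i' _
        congr 2
        ring
      rw [hAeq, Aval (α+2*(j:ℝ)+1) hγ (m-j) (n-j), if_pos (by omega : n-j ≤ m-j), zero_mul]
  · rintro ⟨rfl, hnm, hmk⟩
    rw [hI]
    have hγ : (-1:ℝ) < α + 2*(j:ℝ) + 1 := by
      have : (0:ℝ) ≤ j := Nat.cast_nonneg j
      linarith
    have hAeq : (∑ i ∈ Finset.range ((m-j)+1), ∑ i' ∈ Finset.range ((n-j)+1),
          lcoef (α+2*(j:ℝ)+1) (m-j) i * dlcoef (α+2*(j:ℝ)+1) (n-j) i'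
            * Real.Gamma (α+j+j+i+i'+2))
        = ∑ i ∈ Finset.range ((m-j)+1), ∑ i' ∈ Finset.range ((n-j)+1),
          lcoef (α+2*(j:ℝ)+1) (m-j) i * dlcoef (α+2*(j:ℝ)+1) (n-j) i'
            * Real.Gamma ((α+2*(j:ℝ)+1)+i+i'+1) := by
      apply Finset.sum_congr rfl; intro i _
      apply Finset.sum_congr rfl; intro i' _
      congr 2
      ring
    rw [hAeq, Aval (α+2*(j:ℝ)+1) hγ (m-j) (n-j), if_neg (by omega : ¬ (n-j ≤ m-j)),
      hBv, if_pos rfl]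
    -- final algebra
    have h1 : (α+2*(j:ℝ)+1) + ((m-j:ℕ):ℝ) + 1 = α + m + j + 2 := by
      push_cast [Nat.cast_sub hmk]
      ring
    have h2 : ((n-j:ℕ):ℝ) - ((m-j:ℕ):ℝ) = (n:ℝ) - m := by
      push_cast [Nat.cast_sub (by omega : j ≤ n), Nat.cast_sub hmk]
      ring
    rw [h1, h2, tconst]
    have hnm' : (0:ℝ) < (n:ℝ) - (m:ℝ) := by
      have : (m:ℝ) < n := by exact_mod_cast hnm
      linarith
    have f1 := fact_ne0 (m-j)
    have f2 := fact_ne0 j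
    field_simp
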